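/- Let β ≥ 1, Y finite, and for each y let Φ_y ∈ ℝ^m with f_y(μ) = ⟨Φ_y, μ⟩. Define φ_β(μ) implicitly by ∑_y(max(0,(f_y(μ)+φ_β(μ))/β+1))^β = 1, and assume at μ all terms (f_y(μ)+φ_β(μ))/β + 1 are positive. Then φ_β is differentiable at μ with gradient ∇φ_β(μ) = -∑_y p_y Φ_y, where p_y = ((f_y(μ)+φ_β(μ))/β+1)^(β-1) / ∑_j ((f_j(μ)+φ_β(μ))/β+1)^(β-1). -/

import Mathlib

open Filter Topology ContinuousLinearMap

theorem implicit_gradient (Y : Type*) [Fintype Y] [Nonempty Y]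
    (m : ℕ) (β : ℝ) (hβ : 1 ≤ β) (Φ : Y → (Fin m → ℝ))
    (φ : (Fin m → ℝ) → ℝ)
    (hφ : ∀ μ' : Fin m → ℝ,
      ∑ y, (max 0 ((∑ i, Φ y i * μ' i + φ μ') / β + 1)) ^ β = 1)
    (μ : Fin m → ℝ)
    (hpos : ∀ y, 0 < (∑ i, Φ y i * μ i + φ μ) / β + 1)
    (p : Y → ℝ)
    (hp : ∀ y, p y = ((∑ i, Φ y i * μ i + φ μ) / β + 1) ^ (β - 1) /
      ∑ j, ((∑ i, Φ j i * μ i + φ μ) / β + 1) ^ (β - 1)) :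
    DifferentiableAt ℝ φ μ ∧
      ∀ v : Fin m → ℝ, fderiv ℝ φ μ v = -∑ y, p y * ∑ i, Φ y i * v i := by
  classical
  have hβ0 : (0:ℝ) < β := lt_of_lt_of_le one_pos hβ
  set f : Y → (Fin m → ℝ) → ℝ := fun y x => ∑ i, Φ y i * x i with hfdef
  set c : Y → ℝ := fun y => (f y μ + φ μ) / β + 1 with hcdef
  have hcpos : ∀ y, 0 < c y := hpos
  set S : ℝ := ∑ y, c y ^ (β - 1) with hSdef
  have hSpos : 0 < S :=
    Finset.sum_pos (fun y _ => Real.rpow_pos_of_pos (hcpos y) _) Finset.univ_nonempty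
  -- the linear functionals
  set l : Y → ((Fin m → ℝ) →L[ℝ] ℝ) :=
    fun y => ∑ i, Φ y i • (ContinuousLinearMap.proj i) with hldef
  have hl : ∀ y v, l y v = f y v := by
    intro y v
    simp [hldef, hfdef, ContinuousLinearMap.sum_apply]
  set L : Y → (((Fin m → ℝ) × ℝ) →L[ℝ] ℝ) :=
    fun y => β⁻¹ • ((l y).comp (ContinuousLinearMap.fst ℝ (Fin m → ℝ) ℝ)
      + ContinuousLinearMap.snd ℝ (Fin m → ℝ) ℝ) with hLdef
  have hLap : ∀ y (z : (Fin m → ℝ) × ℝ), L y z = (f y z.1 + z.2) / β := by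
    intro y z
    simp [hLdef, hl, div_eq_inv_mul]
    ring
  set z₀ : (Fin m → ℝ) × ℝ := (μ, φ μ) with hz₀def
  -- strict derivative of the affine maps
  have hu : ∀ y (z : (Fin m → ℝ) × ℝ),
      HasStrictFDerivAt (fun w : (Fin m → ℝ) × ℝ => (f y w.1 + w.2) / β + 1) (L y) z := by
    intro y z
    have h1 : HasStrictFDerivAt (fun w : (Fin m → ℝ) × ℝ => L y w + 1) (L y) z :=
      (L y).hasStrictFDerivAt.add_const 1
    have : (fun w : (Fin m → ℝ) × ℝ => L y w + 1)
        = fun w : (Fin m → ℝ) × ℝ => (f y w.1 + w.2) / β + 1 := by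
      funext w; rw [hLap]
    rwa [this] at h1
  set G : (Fin m → ℝ) × ℝ → ℝ :=
    fun z => ∑ y, (max 0 ((f y z.1 + z.2) / β + 1)) ^ β with hGdef
  have hG1 : ∀ x : Fin m → ℝ, G (x, φ x) = 1 := fun x => hφ x
  set G' : ((Fin m → ℝ) × ℝ) →L[ℝ] ℝ := ∑ y, (β * c y ^ (β - 1)) • L y with hG'def
  have hG'ap : ∀ z : (Fin m → ℝ) × ℝ, G' z = ∑ y, c y ^ (β - 1) * (f y z.1 + z.2) := by
    intro z
    rw [hG'def]
    rw [ContinuousLinearMap.sum_apply]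
    refine Finset.sum_congr rfl fun y _ => ?_
    rw [ContinuousLinearMap.smul_apply, hLap]
    rw [smul_eq_mul]
    have hβne : β ≠ 0 := hβ0.ne'
    field_simp
  -- strict derivative of G at z₀
  have hGstrict : HasStrictFDerivAt G G' z₀ := by
    have hsum : HasStrictFDerivAt
        (fun z : (Fin m → ℝ) × ℝ => ∑ y, ((f y z.1 + z.2) / β + 1) ^ β) G' z₀ := by
      rw [hG'def]
      apply HasStrictFDerivAt.fun_sum
      intro y _
      have hr : HasStrictDerivAt (fun s : ℝ => s ^ β) (β * (c y) ^ (β - 1))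
          ((fun w : (Fin m → ℝ) × ℝ => (f y w.1 + w.2) / β + 1) z₀) :=
        Real.hasStrictDerivAt_rpow_const (Or.inr hβ)
      exact hr.comp_hasStrictFDerivAt z₀ (hu y z₀)
    apply hsum.congr_of_eventuallyEq
    have hev : ∀ᶠ z : (Fin m → ℝ) × ℝ in 𝓝 z₀,
        ∀ y, 0 < (f y z.1 + z.2) / β + 1 := by
      rw [eventually_all]
      intro y
      exact (hu y z₀).continuousAt.eventually (eventually_gt_nhds (hcpos y))
    filter_upwards [hev] with z hz
    rw [hGdef]
    refine Finset.sum_congr rfl fun y _ => ?_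
    rw [max_eq_right (hz y).le]
  -- the invertible derivative of ψ
  set A : ((Fin m → ℝ) × ℝ) →L[ℝ] ((Fin m → ℝ) × ℝ) :=
    (ContinuousLinearMap.fst ℝ (Fin m → ℝ) ℝ).prod G' with hAdef
  set B : ((Fin m → ℝ) × ℝ) →L[ℝ] ℝ :=
    S⁻¹ • (ContinuousLinearMap.snd ℝ (Fin m → ℝ) ℝ
      - G'.comp ((ContinuousLinearMap.fst ℝ (Fin m → ℝ) ℝ).prod 0)) with hBdef
  set A' : ((Fin m → ℝ) × ℝ) →L[ℝ] ((Fin m → ℝ) × ℝ) :=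
    (ContinuousLinearMap.fst ℝ (Fin m → ℝ) ℝ).prod B with hA'def
  have hBap : ∀ z : (Fin m → ℝ) × ℝ, B z = S⁻¹ * (z.2 - G' (z.1, 0)) := by
    intro z; simp [hBdef]
  have hG'split : ∀ v t, G' (v, t) = G' (v, 0) + S * t := by
    intro v t
    rw [hG'ap, hG'ap, hSdef, Finset.sum_mul]
    rw [← Finset.sum_add_distrib]
    refine Finset.sum_congr rfl fun y _ => ?_
    ring
  have h₁ : ∀ z, A' (A z) = z := by
    intro z
    have : A z = (z.1, G' z) := rfl
    rw [this]
    have : A' (z.1, G' z) = (z.1, B (z.1, G' z)) := rfl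
    rw [this, hBap]
    have : G' z = G' (z.1, z.2) := rfl
    rw [this, hG'split]
    have : S⁻¹ * (G' (z.1, 0) + S * z.2 - G' (z.1, 0)) = z.2 := by
      field_simp
      ring
    rw [this]
  have h₂ : ∀ z, A (A' z) = z := by
    intro z
    have h3 : A' z = (z.1, B z) := rfl
    rw [h3]
    have h4 : A (z.1, B z) = (z.1, G' (z.1, B z)) := rfl
    rw [h4, hG'split, hBap]
    have : G' (z.1, 0) + S * (S⁻¹ * (z.2 - G' (z.1, 0))) = z.2 := by
      field_simp
      ring
    rw [this]
  set e : ((Fin m → ℝ) × ℝ) ≃L[ℝ] ((Fin m → ℝ) × ℝ) :=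
    ContinuousLinearEquiv.equivOfInverse A A' h₁ h₂ with hedef
  set ψ : (Fin m → ℝ) × ℝ → (Fin m → ℝ) × ℝ := fun z => (z.1, G z) with hψdef
  have hψ : HasStrictFDerivAt ψ (e : ((Fin m → ℝ) × ℝ) →L[ℝ] ((Fin m → ℝ) × ℝ)) z₀ := by
    have : (e : ((Fin m → ℝ) × ℝ) →L[ℝ] ((Fin m → ℝ) × ℝ)) = A := rfl
    rw [this, hAdef]
    exact HasStrictFDerivAt.prodMk (hasStrictFDerivAt_fst) hGstrict
  set g : (Fin m → ℝ) × ℝ → (Fin m → ℝ) × ℝ := hψ.localInverse ψ e z₀ with hgdef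
  have hg1 : ∀ᶠ z in 𝓝 z₀, g (ψ z) = z := hψ.eventually_left_inverse
  have hg2 : HasStrictFDerivAt g
      (e.symm : ((Fin m → ℝ) × ℝ) →L[ℝ] ((Fin m → ℝ) × ℝ)) (ψ z₀) := hψ.to_localInverse
  have hψz₀ : ψ z₀ = (μ, 1) := by
    rw [hψdef]; exact Prod.ext rfl (hG1 μ)
  -- continuity of φ at μ
  have hmono : ∀ (x : Fin m → ℝ) (ν₁ ν₂ : ℝ), ν₁ ≤ ν₂ →
      (∑ y, (max 0 ((f y x + ν₁) / β + 1)) ^ β)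
        ≤ ∑ y, (max 0 ((f y x + ν₂) / β + 1)) ^ β := by
    intro x ν₁ ν₂ h
    refine Finset.sum_le_sum fun y _ => ?_
    apply Real.rpow_le_rpow (le_max_left 0 _)
    · exact max_le_max le_rfl (by gcongr)
    · exact hβ0.le
  have hcontK : ∀ ν : ℝ, Continuous fun x : Fin m → ℝ =>
      ∑ y, (max 0 ((f y x + ν) / β + 1)) ^ β := by
    intro ν
    apply continuous_finset_sum
    intro y _
    have h1 : Continuous fun x : Fin m → ℝ => max 0 ((f y x + ν) / β + 1) := by
      apply Continuous.max continuous_const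
      exact (((continuous_finset_sum _ fun i _ =>
        continuous_const.mul (continuous_apply i)).add continuous_const).div_const β).add
        continuous_const
    rw [continuous_iff_continuousAt]
    intro x
    exact (Real.continuousAt_rpow_const _ _ (Or.inr hβ0.le)).comp h1.continuousAt
  have hlt : ∀ a, a < φ μ → (∑ y, (max 0 ((f y μ + a) / β + 1)) ^ β) < 1 := by
    intro a ha
    have h2 : (∑ y, (max 0 ((f y μ + a) / β + 1)) ^ β)
        < ∑ y, (max 0 ((f y μ + φ μ) / β + 1)) ^ β := by
      refine Finset.sum_lt_sum_of_nonempty Finset.univ_nonempty fun y _ => ?_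
      apply Real.rpow_lt_rpow (le_max_left 0 _) _ hβ0
      have hcy : max 0 ((f y μ + φ μ) / β + 1) = c y := max_eq_right (hcpos y).le
      rw [hcy]
      rcases le_or_gt ((f y μ + a) / β + 1) 0 with h | h
      · rw [max_eq_left h]; exact hcpos y
      · rw [max_eq_right h.le]
        have h10 : (f y μ + a) / β + 1 < (f y μ + φ μ) / β + 1 := by gcongr
        exact h10
    calc (∑ y, (max 0 ((f y μ + a) / β + 1)) ^ β)
        < ∑ y, (max 0 ((f y μ + φ μ) / β + 1)) ^ β := h2
      _ = 1 := hφ μ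
  have hgt : ∀ b, φ μ < b → 1 < ∑ y, (max 0 ((f y μ + b) / β + 1)) ^ β := by
    intro b hb
    have h2 : (∑ y, (max 0 ((f y μ + φ μ) / β + 1)) ^ β)
        < ∑ y, (max 0 ((f y μ + b) / β + 1)) ^ β := by
      refine Finset.sum_lt_sum_of_nonempty Finset.univ_nonempty fun y _ => ?_
      apply Real.rpow_lt_rpow (le_max_left 0 _) _ hβ0
      have hcy : max 0 ((f y μ + φ μ) / β + 1) = c y := max_eq_right (hcpos y).le
      rw [hcy]
      have hlt2 : c y < (f y μ + b) / β + 1 := by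
        have h10 : (f y μ + φ μ) / β + 1 < (f y μ + b) / β + 1 := by gcongr
        exact h10
      exact lt_of_lt_of_le hlt2 (le_max_right 0 _)
    calc (1:ℝ) = ∑ y, (max 0 ((f y μ + φ μ) / β + 1)) ^ β := (hφ μ).symm
      _ < ∑ y, (max 0 ((f y μ + b) / β + 1)) ^ β := h2
  have hφcont : ContinuousAt φ μ := by
    rw [ContinuousAt]
    apply tendsto_order.2
    constructor
    · intro a ha
      have hKlt := hlt a ha
      have := ((hcontK a).continuousAt (x := μ)).eventually (eventually_lt_nhds hKlt)
      filter_upwards [this] with x hx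
      by_contra h
      push_neg at h
      have h5 : (1:ℝ) ≤ ∑ y, (max 0 ((f y x + a) / β + 1)) ^ β := by
        calc (1:ℝ) = ∑ y, (max 0 ((f y x + φ x) / β + 1)) ^ β := (hφ x).symm
          _ ≤ ∑ y, (max 0 ((f y x + a) / β + 1)) ^ β := hmono x (φ x) a h
      linarith
    · intro b hb
      have hKgt := hgt b hb
      have := ((hcontK b).continuousAt (x := μ)).eventually (eventually_gt_nhds hKgt)
      filter_upwards [this] with x hx
      by_contra h
      push_neg at h
      have h5 : (∑ y, (max 0 ((f y x + b) / β + 1)) ^ β) ≤ 1 := by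
        calc (∑ y, (max 0 ((f y x + b) / β + 1)) ^ β)
            ≤ ∑ y, (max 0 ((f y x + φ x) / β + 1)) ^ β := hmono x b (φ x) h
          _ = 1 := hφ x
      linarith
  -- φ locally equals the implicit function
  have htend : Tendsto (fun x : Fin m → ℝ => ((x, φ x) : (Fin m → ℝ) × ℝ)) (𝓝 μ) (𝓝 z₀) :=
    tendsto_id.prodMk_nhds hφcont
  have hev : ∀ᶠ x in 𝓝 μ, g (x, 1) = (x, φ x) := by
    filter_upwards [htend.eventually hg1] with x hx
    have h6 : ψ (x, φ x) = (x, 1) := Prod.ext rfl (hG1 x)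
    rw [← h6]
    exact hx
  have hφev : (fun x => (g (x, 1)).2) =ᶠ[𝓝 μ] φ := by
    filter_upwards [hev] with x hx
    rw [hx]
  set D : (Fin m → ℝ) →L[ℝ] ℝ :=
    (ContinuousLinearMap.snd ℝ (Fin m → ℝ) ℝ).comp
      ((e.symm : ((Fin m → ℝ) × ℝ) →L[ℝ] ((Fin m → ℝ) × ℝ)).comp
        ((ContinuousLinearMap.id ℝ (Fin m → ℝ)).prod 0)) with hDdef
  have hgf : HasFDerivAt (fun x : Fin m → ℝ => (g (x, 1)).2) D μ := by
    have h1 : HasFDerivAt (fun x : Fin m → ℝ => ((x, (1:ℝ)) : (Fin m → ℝ) × ℝ))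
        ((ContinuousLinearMap.id ℝ (Fin m → ℝ)).prod 0) μ :=
      HasFDerivAt.prodMk (hasFDerivAt_id μ) (hasFDerivAt_const 1 μ)
    have hg2' : HasFDerivAt g
        (e.symm : ((Fin m → ℝ) × ℝ) →L[ℝ] ((Fin m → ℝ) × ℝ)) ((μ, 1) : (Fin m → ℝ) × ℝ) := by
      have := hg2.hasFDerivAt
      rwa [hψz₀] at this
    have h2 := hg2'.comp μ h1
    have h3 := (hasFDerivAt_snd (p := g ((μ, 1) : (Fin m → ℝ) × ℝ))).comp μ h2
    exact h3
  have hφderiv : HasFDerivAt φ D μ := hgf.congr_of_eventuallyEq hφev.symm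
  refine ⟨hφderiv.differentiableAt, fun v => ?_⟩
  rw [hφderiv.fderiv]
  have hDv : D v = S⁻¹ * (0 - G' (v, 0)) := by
    have h7 : D v = B (((v, 0) : (Fin m → ℝ) × ℝ)) := rfl
    rw [h7, hBap]
  rw [hDv, hG'ap]
  have h8 : ∀ y, p y = c y ^ (β - 1) / S := by
    intro y; rw [hp y]
  have h9 : -∑ y, p y * ∑ i, Φ y i * v i = -(S⁻¹ * ∑ y, c y ^ (β - 1) * (f y v + 0)) := by
    rw [neg_inj, Finset.mul_sum]
    refine Finset.sum_congr rfl fun y _ => ?_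
    rw [h8 y]
    field_simp
    simp [hfdef]
  rw [h9]
  show S⁻¹ * (0 - ∑ y, c y ^ (β - 1) * (f y v + 0))
      = -(S⁻¹ * ∑ y, c y ^ (β - 1) * (f y v + 0))
  ring
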